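/- Let T be a finite tree satisfying the path condition. Then there do not exist two edges v₁v₂ and v₃v₄ of T sharing no endpoint such that deg(v₁) < deg(v₃) ≤ deg(v₄) < deg(v₂). -/

import Mathlib

open SimpleGraph

/-- Degree of a vertex. -/
noncomputable def deg {V : Type*} (G : SimpleGraph V) (v : V) : ℕ :=
  Nat.card (G.neighborSet v)

/-- Sombor index. -/
noncomputable def somborIndex {V : Type*} (G : SimpleGraph V) : ℝ :=
  ∑ᶠ e ∈ G.edgeSet,
    Sym2.lift ⟨fun u v => Real.sqrt ((deg G u : ℝ) ^ 2 + (deg G v : ℝ) ^ 2),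
      fun u v => by simp [add_comm]⟩ e

/-- Multiset of degrees of non-pendant vertices. -/
noncomputable def degSeq {V : Type*} [Fintype V] (G : SimpleGraph V) : Multiset ℕ :=
  ((Finset.univ : Finset V).filter (fun v => deg G v ≠ 1)).val.map (deg G)

def pathCondition {V : Type*} (G : SimpleGraph V) : Prop :=
  ∀ ⦃u v : V⦄ (p : G.Walk u v), p.IsPath → 3 ≤ p.length →
    deg G u < deg G v → deg G (p.getVert 1) ≤ deg G (p.getVert (p.length - 1))

def attachPendants {V : Type*} (G : SimpleGraph V) (v : V) (k : ℕ) :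
    SimpleGraph (V ⊕ Fin k) where
  Adj x y :=
    match x, y with
    | Sum.inl a, Sum.inl b => G.Adj a b
    | Sum.inl a, Sum.inr _ => a = v
    | Sum.inr _, Sum.inl b => b = v
    | Sum.inr _, Sum.inr _ => False
  symm := by
    constructor
    rintro (a | i) (b | j) h
    · exact h.symm
    · exact h
    · exact h
    · exact h.elim
  loopless := by
    constructor
    rintro (a | i) h
    · exact G.irrefl h
    · exact h

lemma split_lemma {V : Type*} [DecidableEq V] {T : SimpleGraph V} (hT : T.IsAcyclic) {u v w : V}
    (p : T.Walk u w) (hp : p.IsPath) (h : T.Adj u v) (hv : v ∈ p.support) :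
    ∃ q : T.Walk v w, q.IsPath ∧ u ∉ q.support ∧ p = Walk.cons h q := by
  have ht : (p.takeUntil v hv).IsPath := hp.takeUntil hv
  have he : p.takeUntil v hv = Walk.cons h Walk.nil := by
    have := hT.path_unique ⟨p.takeUntil v hv, ht⟩
      ⟨Walk.cons h Walk.nil, by simp [h.ne]⟩
    exact congrArg Subtype.val this
  have hps : p = Walk.cons h (p.dropUntil v hv) := by
    conv_lhs => rw [← Walk.take_spec p hv]
    rw [he]
    simp
  refine ⟨p.dropUntil v hv, hp.dropUntil hv, ?_, hps⟩
  rw [hps] at hp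
  exact ((Walk.cons_isPath_iff _ _).1 hp).2

lemma key_lemma {V : Type*} (T : SimpleGraph V) (hpc : pathCondition T)
    {a b c d : V} (h1 : T.Adj a b) (h2 : T.Adj c d) (r : T.Walk b c)
    (hr : r.IsPath) (ha : a ∉ r.support) (hd : d ∉ r.support)
    (had : a ≠ d) (hbc : b ≠ c) (hlt : deg T a < deg T d) :
    deg T b ≤ deg T c := by
  have hrc : (r.concat h2).IsPath := by
    rw [← Walk.isPath_reverse_iff, Walk.reverse_concat]
    refine Walk.IsPath.cons hr.reverse ?_
    rw [Walk.support_reverse, List.mem_reverse]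
    exact hd
  have hna : a ∉ (r.concat h2).support := by
    rw [Walk.support_concat]
    simp only [List.concat_eq_append, List.mem_append, List.mem_singleton]
    rintro (h | h)
    · exact ha h
    · exact had h
  set q : T.Walk a d := Walk.cons h1 (r.concat h2) with hq
  have hqp : q.IsPath := hrc.cons hna
  have hrlen : 1 ≤ r.length :=
    Nat.one_le_iff_ne_zero.mpr fun h0 => hbc (Walk.eq_of_length_eq_zero h0)
  have hql : q.length = r.length + 2 := by
    simp [hq, Walk.length_concat]
  have hg1 : q.getVert 1 = b := by
    simp [hq]
  have hg2 : q.getVert (q.length - 1) = c := by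
    rw [hql]
    show q.getVert (r.length + 1) = c
    rw [hq]
    rw [Walk.getVert_cons_succ, Walk.concat_eq_append, Walk.getVert_append]
    simp
  have := hpc q hqp (by omega) hlt
  rwa [hg1, hg2] at this

/-- In a tree satisfying the path condition, there are no two edges `v₁v₂` and `v₃v₄` sharing
no endpoint with `deg v₁ < deg v₃ ≤ deg v₄ < deg v₂`. -/
theorem no_bad_edge_pair {V : Type*} [Fintype V] (T : SimpleGraph V) (hT : T.IsTree)
    (hpc : pathCondition T) :
    ¬ ∃ v₁ v₂ v₃ v₄ : V, T.Adj v₁ v₂ ∧ T.Adj v₃ v₄ ∧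
      v₁ ≠ v₃ ∧ v₁ ≠ v₄ ∧ v₂ ≠ v₃ ∧ v₂ ≠ v₄ ∧
      deg T v₁ < deg T v₃ ∧ deg T v₃ ≤ deg T v₄ ∧ deg T v₄ < deg T v₂ := by
  classical
  rintro ⟨v₁, v₂, v₃, v₄, h12, h34, h13, h14, h23, h24, d13, d34, d42⟩
  obtain ⟨w⟩ := hT.isConnected.preconnected v₂ v₃
  set p : T.Walk v₂ v₃ := w.toPath.val with hp
  have hpath : p.IsPath := w.toPath.prop
  by_cases h1 : v₁ ∈ p.support <;> by_cases h4 : v₄ ∈ p.support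
  · -- case D : both inside
    obtain ⟨p₁, hp₁, hv₂, heq⟩ := split_lemma hT.IsAcyclic p hpath h12.symm h1
    have h4' : v₄ ∈ p₁.support := by
      rw [heq, Walk.support_cons] at h4
      rcases List.mem_cons.mp h4 with h | h
      · exact absurd h.symm h24
      · exact h
    obtain ⟨p₂, hp₂, hv₃, heq₂⟩ := split_lemma hT.IsAcyclic p₁.reverse hp₁.reverse h34
      (by rw [Walk.support_reverse, List.mem_reverse]; exact h4')
    have hv₂' : v₂ ∉ p₂.support := by
      intro hc
      apply hv₂
      have : v₂ ∈ p₁.reverse.support := by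
        rw [heq₂, Walk.support_cons]; exact List.mem_cons_of_mem _ hc
      rwa [Walk.support_reverse, List.mem_reverse] at this
    have := key_lemma T hpc h34 h12 p₂ hp₂ hv₃ hv₂' h23.symm
      (fun h => h14 h.symm) (lt_of_le_of_lt d34 d42)
    omega
  · -- case B : v₁ inside, v₄ outside
    obtain ⟨p₁, hp₁, hv₂, heq⟩ := split_lemma hT.IsAcyclic p hpath h12.symm h1
    have h4' : v₄ ∉ p₁.support := by
      intro hc
      apply h4
      rw [heq, Walk.support_cons]
      exact List.mem_cons_of_mem _ hc
    have := key_lemma T hpc h34.symm h12 p₁.reverse hp₁.reverse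
      (by rw [Walk.support_reverse, List.mem_reverse]; exact h4')
      (by rw [Walk.support_reverse, List.mem_reverse]; exact hv₂)
      h24.symm (Ne.symm h13) d42
    omega
  · -- case C : v₁ outside, v₄ inside
    obtain ⟨p₂, hp₂, hv₃, heq⟩ := split_lemma hT.IsAcyclic p.reverse hpath.reverse h34
      (by rw [Walk.support_reverse, List.mem_reverse]; exact h4)
    have h1' : v₁ ∉ p₂.support := by
      intro hc
      apply h1
      have : v₁ ∈ p.reverse.support := by
        rw [heq, Walk.support_cons]; exact List.mem_cons_of_mem _ hc
      rwa [Walk.support_reverse, List.mem_reverse] at this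
    have := key_lemma T hpc h12 h34.symm p₂.reverse hp₂.reverse
      (by rw [Walk.support_reverse, List.mem_reverse]; exact h1')
      (by rw [Walk.support_reverse, List.mem_reverse]; exact hv₃)
      h13 h24 d13
    omega
  · -- case A : both outside
    have := key_lemma T hpc h12 h34 p hpath h1 h4 h14 h23
      (lt_of_lt_of_le d13 d34)
    omega
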